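/- Let d ≥ 1, let V ⊆ ℝᵈ be a bounded open neighborhood of 0, and let z : ℝᵈ → ℝ be twice continuously differentiable on a neighborhood of the closure of V with z(0) = 0. Assume c := inf { z(x)/‖x‖² : x ∈ V, x ≠ 0 } > 0, and let Q(ξ) := ½ D²z(0)(ξ, ξ) denote the second-order Taylor form of z at 0. Let v : ℝᵈ × [0,1] → ℝ be continuous. Then Q is a positive definite quadratic form (indeed Q(ξ) ≥ c‖ξ‖²), and lim_{t→0⁺} ∫_V (2πt)^{−d/2} e^{−z(u)/(2t)} v(u, t) du = v(0,0) · (2π)^{−d/2} ∫_{ℝᵈ} e^{−Q(ξ)/2} dξ. -/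

import Mathlib

open Set Filter MeasureTheory Real


lemma aux_quad_limit {g g' : ℝ → ℝ} {a : ℝ}
    (hg : ∀ᶠ s in nhds (0:ℝ), HasDerivAt g (g' s) s) (hg0 : g 0 = 0) (hg'0 : g' 0 = 0)
    (hg'' : HasDerivAt g' a 0) :
    Tendsto (fun s => g s / s ^ 2) (nhdsWithin 0 (Ioi 0)) (nhds (a / 2)) := by
  apply HasDerivAt.lhopital_zero_nhdsGT (g' := fun s => 2 * s)
  · exact nhdsWithin_le_nhds hg
  · filter_upwards with s
    simpa using hasDerivAt_pow 2 s
  · filter_upwards [self_mem_nhdsWithin] with s (hs : s ∈ Ioi 0)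
    exact mul_ne_zero two_ne_zero (ne_of_gt hs)
  · have : ContinuousAt g 0 := (hg.self_of_nhds).continuousAt
    have := this.tendsto
    rw [hg0] at this
    exact this.mono_left nhdsWithin_le_nhds
  · have : Tendsto (fun s : ℝ => s ^ 2) (nhdsWithin 0 (Ioi 0)) (nhds ((0:ℝ)^2)) :=
      (continuous_pow 2).continuousAt.tendsto.mono_left nhdsWithin_le_nhds
    simpa using this
  · have hslope : Tendsto (fun s : ℝ => g' s / s) (nhdsWithin 0 (Ioi 0)) (nhds a) := by
      have := hasDerivAt_iff_tendsto_slope.1 hg''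
      have h2 : Tendsto (slope g' 0) (nhdsWithin 0 (Ioi 0)) (nhds a) :=
        this.mono_left (nhdsWithin_mono 0 (fun s hs => ne_of_gt hs))
      refine h2.congr' ?_
      filter_upwards with s
      simp [slope_def_field, hg'0, div_eq_inv_mul]
    have := hslope.div_const 2
    refine this.congr' ?_ |>.mono_right (le_of_eq ?_)
    · filter_upwards with s
      ring
    · norm_num


lemma aux_integrable_gauss (d : ℕ) {b : ℝ} (hb : 0 < b) :
    Integrable (fun ξ : EuclideanSpace ℝ (Fin d) => Real.exp (-b * ‖ξ‖ ^ 2)) := by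
  have h := GaussianFourier.integrable_cexp_neg_mul_sq_norm_add (V := EuclideanSpace ℝ (Fin d))
      (b := (b : ℂ)) (by simpa using hb) 0 0
  have h2 := h.norm
  refine h2.congr (Eventually.of_forall fun ξ => ?_)
  simp only [Complex.norm_exp]
  congr 1
  simp only [Complex.add_re, Complex.mul_re]
  norm_num
  exact Or.inl (by norm_cast)

set_option maxHeartbeats 1600000 in
/-- Laplace-method limit at a non-degenerate minimum: if `z` is `C²` near the closure of a
bounded open neighborhood `V` of `0`, `z(0) = 0`, `c := inf { z(x)/‖x‖² : x ∈ V, x ≠ 0 }`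
is positive, and `Q(ξ) := ½ D²z(0)(ξ,ξ)`, then `Q` is positive definite (indeed
`Q(ξ) ≥ c‖ξ‖²`) and, for continuous `v`,
`∫_V (2πt)^{-d/2} e^{-z(u)/(2t)} v(u,t) du → v(0,0) (2π)^{-d/2} ∫ e^{-Q(ξ)/2} dξ` as
`t → 0⁺`. -/
theorem laplace_method_nondegenerate_minimum
    (d : ℕ) (hd : 1 ≤ d) (V : Set (EuclideanSpace ℝ (Fin d)))
    (hVopen : IsOpen V) (hVbdd : Bornology.IsBounded V) (hV0 : (0 : EuclideanSpace ℝ (Fin d)) ∈ V)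
    (z : EuclideanSpace ℝ (Fin d) → ℝ)
    (U : Set (EuclideanSpace ℝ (Fin d))) (hUopen : IsOpen U) (hU : closure V ⊆ U)
    (hz : ContDiffOn ℝ 2 z U) (hz0 : z 0 = 0)
    (c : ℝ) (hc : c = sInf {r : ℝ | ∃ x ∈ V, x ≠ 0 ∧ r = z x / ‖x‖ ^ 2}) (hcpos : 0 < c)
    (Q : EuclideanSpace ℝ (Fin d) → ℝ)
    (hQ : ∀ ξ, Q ξ = (1 / 2) * iteratedFDeriv ℝ 2 z 0 ![ξ, ξ])
    (v : EuclideanSpace ℝ (Fin d) → ℝ → ℝ)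
    (hv : ContinuousOn (fun p : EuclideanSpace ℝ (Fin d) × ℝ => v p.1 p.2)
      (univ ×ˢ Icc (0:ℝ) 1)) :
    (∀ ξ, c * ‖ξ‖ ^ 2 ≤ Q ξ) ∧
      Tendsto
        (fun t : ℝ =>
          ∫ u in V, (2 * π * t) ^ (-(d : ℝ) / 2) * Real.exp (-z u / (2 * t)) * v u t)
        (nhdsWithin 0 (Ioi 0))
        (nhds (v 0 0 * (2 * π) ^ (-(d : ℝ) / 2) * ∫ ξ, Real.exp (-Q ξ / 2))) := by
  classical
  -- z ≥ c ‖x‖² on V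
  have hzV : ∀ x ∈ V, c * ‖x‖ ^ 2 ≤ z x := by
    intro x hx
    rcases eq_or_ne x 0 with rfl | hx0
    · simp [hz0]
    · have hS : BddBelow {r : ℝ | ∃ x ∈ V, x ≠ 0 ∧ r = z x / ‖x‖ ^ 2} := by
        by_contra h
        rw [Real.sInf_of_not_bddBelow h] at hc
        exact absurd hc hcpos.ne'
      have hmem : z x / ‖x‖ ^ 2 ∈ {r : ℝ | ∃ x ∈ V, x ≠ 0 ∧ r = z x / ‖x‖ ^ 2} :=
        ⟨x, hx, hx0, rfl⟩
      have hle : c ≤ z x / ‖x‖ ^ 2 := hc ▸ csInf_le hS hmem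
      have hn : (0:ℝ) < ‖x‖ ^ 2 := by
        have := norm_pos_iff.2 hx0
        positivity
      calc c * ‖x‖ ^ 2 ≤ z x / ‖x‖ ^ 2 * ‖x‖ ^ 2 := by
            exact mul_le_mul_of_nonneg_right hle hn.le
        _ = z x := div_mul_cancel₀ _ hn.ne'
  have h0U : (0 : EuclideanSpace ℝ (Fin d)) ∈ U := hU (subset_closure hV0)
  have hzAt : ContDiffAt ℝ 2 z 0 := hz.contDiffAt (hUopen.mem_nhds h0U)
  have hmin : IsLocalMin z 0 := by
    filter_upwards [hVopen.mem_nhds hV0] with x hx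
    have h1 := hzV x hx
    have : (0:ℝ) ≤ c * ‖x‖ ^ 2 := by positivity
    rw [hz0]; linarith
  have hdz0 : fderiv ℝ z 0 = 0 := hmin.fderiv_eq_zero
  set B := fderiv ℝ (fderiv ℝ z) 0 with hB
  have hQB : ∀ ξ, Q ξ = B ξ ξ / 2 := by
    intro ξ
    rw [hQ, iteratedFDeriv_two_apply]
    simp only [Matrix.cons_val_zero, Matrix.cons_val_one, Matrix.head_cons]
    ring
  have hfd : ContDiffAt ℝ 1 (fderiv ℝ z) 0 := hzAt.fderiv_right (by norm_num)
  have hBd : HasFDerivAt (fderiv ℝ z) B 0 :=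
    (hfd.differentiableAt one_ne_zero).hasFDerivAt
  have hUev : ∀ ξ : EuclideanSpace ℝ (Fin d), ∀ᶠ s : ℝ in nhds 0, s • ξ ∈ U := by
    intro ξ
    have hco : Continuous fun s : ℝ => s • ξ := continuous_id.smul continuous_const
    have : ContinuousAt (fun s : ℝ => s • ξ) 0 := hco.continuousAt
    refine this.eventually_mem ?_
    simpa using hUopen.mem_nhds h0U
  have hg' : ∀ ξ : EuclideanSpace ℝ (Fin d), ∀ᶠ s : ℝ in nhds 0,
      HasDerivAt (fun s : ℝ => z (s • ξ)) (fderiv ℝ z (s • ξ) ξ) s := by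
    intro ξ
    filter_upwards [hUev ξ] with s hs
    have h1 : DifferentiableAt ℝ z (s • ξ) :=
      (hz.contDiffAt (hUopen.mem_nhds hs)).differentiableAt (by norm_num)
    have h2 : HasDerivAt (fun r : ℝ => r • ξ) ξ s := by
      simpa using (hasDerivAt_id s).smul_const ξ
    exact h1.hasFDerivAt.comp_hasDerivAt s h2
  have hg'' : ∀ ξ : EuclideanSpace ℝ (Fin d),
      HasDerivAt (fun s : ℝ => fderiv ℝ z (s • ξ) ξ) (B ξ ξ) 0 := by
    intro ξ
    have h2 : HasDerivAt (fun r : ℝ => r • ξ) ξ 0 := by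
      simpa using (hasDerivAt_id (0:ℝ)).smul_const ξ
    have h3 : HasDerivAt (fun s : ℝ => fderiv ℝ z (s • ξ)) (B ξ) 0 := by
      have hBd' : HasFDerivAt (fderiv ℝ z) B ((0:ℝ) • ξ) := by
        rw [zero_smul]; exact hBd
      exact hBd'.comp_hasDerivAt 0 h2
    have h4 := h3.clm_apply (hasDerivAt_const 0 ξ)
    simpa using h4
  have hlim : ∀ ξ, Tendsto (fun s : ℝ => z (s • ξ) / s ^ 2) (nhdsWithin 0 (Ioi 0))
      (nhds (Q ξ)) := by
    intro ξ
    have := aux_quad_limit (hg' ξ) (by simp [hz0]) (by simp [hdz0]) (hg'' ξ)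
    rw [hQB ξ]
    exact this
  have hQge : ∀ ξ, c * ‖ξ‖ ^ 2 ≤ Q ξ := by
    intro ξ
    refine ge_of_tendsto (hlim ξ) ?_
    have hco : ContinuousAt (fun s : ℝ => s • ξ) 0 :=
      (continuous_id.smul continuous_const).continuousAt
    have hVev : ∀ᶠ s : ℝ in nhdsWithin 0 (Ioi 0), s • ξ ∈ V :=
      (hco.eventually_mem (by simpa using hVopen.mem_nhds hV0)).filter_mono nhdsWithin_le_nhds
    filter_upwards [hVev, self_mem_nhdsWithin] with s hsV hs
    have hs0 : (0:ℝ) < s := hs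
    have h1 := hzV _ hsV
    have hnorm : ‖s • ξ‖ ^ 2 = s ^ 2 * ‖ξ‖ ^ 2 := by
      rw [norm_smul, mul_pow, Real.norm_eq_abs, sq_abs]
    rw [le_div_iff₀ (by positivity : (0:ℝ) < s ^ 2)]
    nlinarith
  refine ⟨hQge, ?_⟩
  -- limit along sqrt
  have hsq : Tendsto Real.sqrt (nhdsWithin 0 (Ioi 0)) (nhdsWithin 0 (Ioi 0)) := by
    rw [tendsto_nhdsWithin_iff]
    constructor
    · have h : Tendsto Real.sqrt (nhds 0) (nhds (Real.sqrt 0)) :=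
        Real.continuous_sqrt.continuousAt
      simpa using h.mono_left nhdsWithin_le_nhds
    · filter_upwards [self_mem_nhdsWithin] with t ht
      exact Real.sqrt_pos.2 ht
  have hlimt : ∀ ξ, Tendsto (fun t : ℝ => z (Real.sqrt t • ξ) / t) (nhdsWithin 0 (Ioi 0))
      (nhds (Q ξ)) := by
    intro ξ
    have h1 := (hlim ξ).comp hsq
    refine h1.congr' ?_
    filter_upwards [self_mem_nhdsWithin] with t (ht : t ∈ Ioi 0)
    simp only [Function.comp]
    rw [Real.sq_sqrt (le_of_lt ht)]
  -- bound on v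
  obtain ⟨M, hM⟩ : ∃ M, ∀ p ∈ (closure V ×ˢ Icc (0:ℝ) 1), |v p.1 p.2| ≤ M := by
    have hK : IsCompact (closure V ×ˢ Icc (0:ℝ) 1) :=
      hVbdd.isCompact_closure.prod isCompact_Icc
    have hcont : ContinuousOn (fun p : EuclideanSpace ℝ (Fin d) × ℝ => v p.1 p.2)
        (closure V ×ˢ Icc (0:ℝ) 1) :=
      hv.mono (prod_mono (subset_univ _) subset_rfl)
    obtain ⟨M, hM⟩ := hK.exists_bound_of_continuousOn hcont
    exact ⟨M, fun p hp => by simpa [Real.norm_eq_abs] using hM p hp⟩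
  have hM0 : 0 ≤ M :=
    le_trans (abs_nonneg _) (hM (0,0) ⟨subset_closure hV0, le_refl 0, zero_le_one⟩)
  set f : ℝ → EuclideanSpace ℝ (Fin d) → ℝ := fun t ξ =>
    Set.indicator V (fun u => Real.exp (-z u / (2*t)) * v u t) (Real.sqrt t • ξ) with hf
  have hVmeas : MeasurableSet V := hVopen.measurableSet
  have hIoc : Ioc (0:ℝ) 1 ∈ nhdsWithin (0:ℝ) (Ioi 0) :=
    Ioc_mem_nhdsGT_of_mem ⟨le_refl 0, zero_lt_one⟩
  -- Step A : change of variables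
  have hstepA : ∀ᶠ t in nhdsWithin (0:ℝ) (Ioi 0),
      (∫ u in V, (2 * π * t) ^ (-(d : ℝ) / 2) * Real.exp (-z u / (2 * t)) * v u t)
        = (2 * π) ^ (-(d : ℝ) / 2) * ∫ ξ, f t ξ := by
    filter_upwards [self_mem_nhdsWithin] with t (ht : t ∈ Ioi 0)
    have ht0 : (0:ℝ) < t := ht
    have hs0 : (0:ℝ) < Real.sqrt t := Real.sqrt_pos.2 ht0
    have h1 : (∫ u in V, (2 * π * t) ^ (-(d : ℝ) / 2) * Real.exp (-z u / (2 * t)) * v u t)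
        = (2 * π * t) ^ (-(d : ℝ) / 2) * ∫ u in V, Real.exp (-z u / (2 * t)) * v u t := by
      simp_rw [mul_assoc]
      exact integral_const_mul _ _
    have h2 : (∫ u in V, Real.exp (-z u / (2 * t)) * v u t)
        = ∫ u, Set.indicator V (fun u => Real.exp (-z u / (2*t)) * v u t) u :=
      (integral_indicator hVmeas).symm
    have h3 := Measure.integral_comp_smul (μ := volume)
      (f := V.indicator fun u => Real.exp (-z u / (2*t)) * v u t) (Real.sqrt t)
    rw [finrank_euclideanSpace_fin] at h3
    have h3 : ∫ ξ, f t ξ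
        = |((Real.sqrt t) ^ d)⁻¹|
          • ∫ u, Set.indicator V (fun u => Real.exp (-z u / (2*t)) * v u t) u := h3
    have h4 : (∫ u, Set.indicator V (fun u => Real.exp (-z u / (2*t)) * v u t) u)
        = (Real.sqrt t) ^ d * ∫ ξ, f t ξ := by
      rw [h3, smul_eq_mul, abs_of_pos (by positivity), ← mul_assoc,
        mul_inv_cancel₀ (by positivity), one_mul]
    have hsp : (Real.sqrt t) ^ d = t ^ ((d:ℝ)/2) := by
      rw [Real.sqrt_eq_rpow, ← Real.rpow_natCast (t ^ ((1:ℝ)/2)) d, ← Real.rpow_mul ht0.le]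
      congr 1
      ring
    rw [h1, h2, h4, ← mul_assoc]
    congr 1
    rw [hsp, Real.mul_rpow (by positivity) ht0.le, mul_assoc, ← Real.rpow_add ht0,
      neg_div, neg_add_cancel, Real.rpow_zero, mul_one]
  -- Step B : dominated convergence
  have hstepB : Tendsto (fun t => ∫ ξ, f t ξ) (nhdsWithin 0 (Ioi 0))
      (nhds (∫ ξ, Real.exp (-Q ξ / 2) * v 0 0)) := by
    refine tendsto_integral_filter_of_dominated_convergence
      (fun ξ => M * Real.exp (-(c/2) * ‖ξ‖^2)) ?_ ?_ ?_ ?_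
    · -- measurability
      filter_upwards [hIoc] with t ht
      have ht0 : (0:ℝ) < t := ht.1
      have htind : f t = Set.indicator
          ((fun ξ : EuclideanSpace ℝ (Fin d) => Real.sqrt t • ξ) ⁻¹' V)
          (fun ξ => Real.exp (-z (Real.sqrt t • ξ) / (2*t)) * v (Real.sqrt t • ξ) t) := by
        funext ξ
        by_cases hmem : Real.sqrt t • ξ ∈ V
        · simp only [hf]
          rw [Set.indicator_of_mem hmem, Set.indicator_of_mem (by exact hmem)]
        · simp only [hf]
          rw [Set.indicator_of_notMem hmem, Set.indicator_of_notMem (by exact hmem)]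
      rw [htind]
      have hWopen : IsOpen ((fun ξ : EuclideanSpace ℝ (Fin d) => Real.sqrt t • ξ) ⁻¹' V) :=
        hVopen.preimage (continuous_const_smul _)
      rw [aestronglyMeasurable_indicator_iff hWopen.measurableSet]
      refine ContinuousOn.aestronglyMeasurable ?_ hWopen.measurableSet
      have hsm : Continuous (fun ξ : EuclideanSpace ℝ (Fin d) => Real.sqrt t • ξ) :=
        continuous_const_smul _
      have hzc : ContinuousOn (fun ξ : EuclideanSpace ℝ (Fin d) => z (Real.sqrt t • ξ))
          ((fun ξ : EuclideanSpace ℝ (Fin d) => Real.sqrt t • ξ) ⁻¹' V) :=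
        (hz.continuousOn).comp hsm.continuousOn (fun ξ hξ => hU (subset_closure hξ))
      refine (Real.continuous_exp.comp_continuousOn ((hzc.neg).div_const _)).mul ?_
      exact hv.comp (hsm.prodMk continuous_const).continuousOn
        (fun ξ hξ => ⟨mem_univ _, ht.1.le, ht.2⟩)
    · -- bound
      filter_upwards [hIoc] with t ht
      refine Eventually.of_forall fun ξ => ?_
      have ht0 : (0:ℝ) < t := ht.1
      by_cases hmem : Real.sqrt t • ξ ∈ V
      · simp only [hf]
        rw [Set.indicator_of_mem hmem, Real.norm_eq_abs, abs_mul,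
          abs_of_pos (Real.exp_pos _)]
        have hns : ‖Real.sqrt t • ξ‖^2 = t * ‖ξ‖^2 := by
          rw [norm_smul, mul_pow, Real.norm_eq_abs, sq_abs, Real.sq_sqrt ht0.le]
        have hzlow : c * (t * ‖ξ‖^2) ≤ z (Real.sqrt t • ξ) := by
          have h5 := hzV _ hmem
          rw [hns] at h5
          exact h5
        have hexp : Real.exp (-z (Real.sqrt t • ξ) / (2*t)) ≤ Real.exp (-(c/2) * ‖ξ‖^2) := by
          apply Real.exp_le_exp.2
          rw [div_le_iff₀ (by positivity)]
          nlinarith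
        have hvb : |v (Real.sqrt t • ξ) t| ≤ M :=
          hM (Real.sqrt t • ξ, t) ⟨subset_closure hmem, ht.1.le, ht.2⟩
        calc Real.exp (-z (Real.sqrt t • ξ) / (2*t)) * |v (Real.sqrt t • ξ) t|
            ≤ Real.exp (-(c/2) * ‖ξ‖^2) * M :=
              mul_le_mul hexp hvb (abs_nonneg _) (Real.exp_pos _).le
          _ = M * Real.exp (-(c/2) * ‖ξ‖^2) := mul_comm _ _
      · simp only [hf]
        rw [Set.indicator_of_notMem hmem]
        simp only [norm_zero]
        positivity
    · exact (aux_integrable_gauss d (by positivity : (0:ℝ) < c/2)).const_mul M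
    · refine Eventually.of_forall fun ξ => ?_
      have hVt : ∀ᶠ t in nhdsWithin (0:ℝ) (Ioi 0), Real.sqrt t • ξ ∈ V := by
        have hco : Continuous fun t : ℝ => Real.sqrt t • ξ :=
          Real.continuous_sqrt.smul continuous_const
        have h := (hco.continuousAt (x := 0)).eventually_mem
          (by simpa using hVopen.mem_nhds hV0)
        exact h.filter_mono nhdsWithin_le_nhds
      have h1 : Tendsto (fun t => Real.exp (-z (Real.sqrt t • ξ) / (2*t)))
          (nhdsWithin 0 (Ioi 0)) (nhds (Real.exp (-Q ξ/2))) := by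
        have h2 : Tendsto (fun t => -z (Real.sqrt t • ξ) / (2*t)) (nhdsWithin 0 (Ioi 0))
            (nhds (-Q ξ/2)) := by
          have h3 := ((hlimt ξ).neg).div_const 2
          refine h3.congr' ?_
          filter_upwards with t
          ring
        exact (Real.continuous_exp.continuousAt.tendsto).comp h2
      have h2 : Tendsto (fun t => v (Real.sqrt t • ξ) t) (nhdsWithin 0 (Ioi 0))
          (nhds (v 0 0)) := by
        have hvc : ContinuousWithinAt (fun p : EuclideanSpace ℝ (Fin d) × ℝ => v p.1 p.2)
            (univ ×ˢ Icc 0 1) (0, 0) :=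
          hv (0,0) ⟨mem_univ _, le_refl 0, zero_le_one⟩
        have h6 : Tendsto (fun t : ℝ => (Real.sqrt t • ξ, t))
            (nhdsWithin 0 (Ioi 0)) (nhdsWithin (0,0) (univ ×ˢ Icc (0:ℝ) 1)) := by
          rw [tendsto_nhdsWithin_iff]
          constructor
          · have hco : Continuous fun t : ℝ => (Real.sqrt t • ξ, t) :=
              (Real.continuous_sqrt.smul continuous_const).prodMk continuous_id
            have h := hco.continuousAt (x := 0)
            have h4 := h.tendsto.mono_left (nhdsWithin_le_nhds (s := Ioi 0))
            simpa using h4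
          · filter_upwards [hIoc] with t ht
            exact ⟨mem_univ _, ht.1.le, ht.2⟩
        exact hvc.tendsto.comp h6
      refine Tendsto.congr' ?_ (h1.mul h2)
      filter_upwards [hVt] with t htV
      simp only [hf]
      rw [Set.indicator_of_mem htV]
  -- assemble
  have hmain : Tendsto (fun t => (2*π) ^ (-(d:ℝ)/2) * ∫ ξ, f t ξ) (nhdsWithin (0:ℝ) (Ioi 0))
      (nhds (v 0 0 * (2*π) ^ (-(d:ℝ)/2) * ∫ ξ, Real.exp (-Q ξ/2))) := by
    have h := hstepB.const_mul ((2*π) ^ (-(d:ℝ)/2))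
    have heq : (2*π) ^ (-(d:ℝ)/2) * (∫ ξ, Real.exp (-Q ξ / 2) * v 0 0)
        = v 0 0 * (2*π) ^ (-(d:ℝ)/2) * ∫ ξ, Real.exp (-Q ξ/2) := by
      rw [integral_mul_const]
      ring
    rw [heq] at h
    exact h
  exact Tendsto.congr' (hstepA.mono fun t ht => ht.symm) hmain
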